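/- If m : 2^S → [0,1] is a basic probability assignment over a finite set S, then the function Bel(P) = ∑_{A ⊆ P} m(A) satisfies Bel(∅) = 0, Bel(S) = 1, and the n-monotonicity inequality Bel(A_1 ∪ ... ∪ A_n) ≥ ∑_{∅ ≠ I ⊆ {1,...,n}} (-1)^{|I|+1} Bel(⋂_{i∈I} A_i) for all n ≥ 1 and all A_1,...,A_n ⊆ S; that is, Bel is a belief function. -/
import Mathlib


open scoped Classical

lemma sum_powerset_neg_one_pow_card_real {α : Type*} [DecidableEq α] {x : Finset α} :
    (∑ I ∈ x.powerset, (-1 : ℝ) ^ I.card) = if x = ∅ then 1 else 0 := by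
  have h := Finset.sum_powerset_neg_one_pow_card (x := x)
  split_ifs with he
  · simp [he]
  · have h2 : ((∑ I ∈ x.powerset, (-1 : ℤ) ^ I.card : ℤ) : ℝ) = 0 := by
      rw [h]; simp [he]
    push_cast at h2
    exact h2

/-- if `m` is a basic probability assignment over a finite set `S`
(`m ∅ = 0`, values in `[0,1]`, total mass `1`), then `Bel(P) = ∑_{A ⊆ P} m A`
satisfies `Bel ∅ = 0`, `Bel S = 1`, and the n-monotonicity inequality
`Bel(⋃ A_i) ≥ ∑_{∅ ≠ I ⊆ {1..n}} (-1)^{|I|+1} Bel(⋂_{i ∈ I} A_i)`;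
that is, `Bel` is a belief function. -/
theorem bpa_gives_belief_function {V : Type*} [Fintype V]
    (m : Set V → ℝ) (hm0 : m ∅ = 0) (hm01 : ∀ A, m A ∈ Set.Icc (0 : ℝ) 1)
    (hmsum : ∑ A : Set V, m A = 1)
    (Bel : Set V → ℝ) (hBel : ∀ P, Bel P = ∑ A : Set V, if A ⊆ P then m A else 0) :
    Bel ∅ = 0 ∧ Bel Set.univ = 1 ∧
    ∀ n : ℕ, 1 ≤ n → ∀ A : Fin n → Set V,
      Bel (⋃ i, A i) ≥
        ∑ I ∈ Finset.univ.powerset.filter (fun I : Finset (Fin n) => I ≠ ∅),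
          (-1 : ℝ) ^ (I.card + 1) * Bel (⋂ i ∈ I, A i) := by
  refine ⟨?_, ?_, ?_⟩
  · rw [hBel, Finset.sum_eq_single (∅ : Set V)]
    · simp [hm0]
    · intro B _ hB; simp [Set.subset_empty_iff, hB]
    · simp
  · rw [hBel]; simpa using hmsum
  · intro n hn A
    rw [ge_iff_le, hBel]
    calc ∑ I ∈ Finset.univ.powerset.filter (fun I : Finset (Fin n) => I ≠ ∅),
          (-1 : ℝ) ^ (I.card + 1) * Bel (⋂ i ∈ I, A i)
        = ∑ I ∈ Finset.univ.powerset.filter (fun I : Finset (Fin n) => I ≠ ∅),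
            ∑ B : Set V, (-1 : ℝ) ^ (I.card + 1) * (if B ⊆ ⋂ i ∈ I, A i then m B else 0) := by
          refine Finset.sum_congr rfl fun I _ => ?_
          rw [hBel, Finset.mul_sum]
      _ = ∑ B : Set V, ∑ I ∈ Finset.univ.powerset.filter (fun I : Finset (Fin n) => I ≠ ∅),
            (-1 : ℝ) ^ (I.card + 1) * (if B ⊆ ⋂ i ∈ I, A i then m B else 0) := Finset.sum_comm
      _ ≤ ∑ B : Set V, (if B ⊆ ⋃ i, A i then m B else 0) := by
          refine Finset.sum_le_sum fun B _ => ?_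
          have hmB : 0 ≤ m B := (hm01 B).1
          set T : Finset (Fin n) := Finset.univ.filter (fun i => B ⊆ A i) with hT
          have hiff : ∀ I : Finset (Fin n), (B ⊆ ⋂ i ∈ I, A i) ↔ I ⊆ T := by
            intro I
            simp [hT, Set.subset_iInter_iff, Finset.subset_iff]
          have hval : ∑ I ∈ Finset.univ.powerset.filter (fun I : Finset (Fin n) => I ≠ ∅),
              (-1 : ℝ) ^ (I.card + 1) * (if B ⊆ ⋂ i ∈ I, A i then m B else 0)
              = (1 - if T = ∅ then 1 else 0) * m B := by
            have h1 : ∀ I : Finset (Fin n),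
                (-1 : ℝ) ^ (I.card + 1) * (if B ⊆ ⋂ i ∈ I, A i then m B else 0)
                = if I ⊆ T then (-1 : ℝ) ^ (I.card + 1) * m B else 0 := by
              intro I
              rw [mul_ite, mul_zero]
              simp [hiff I]
            simp only [h1]
            rw [← Finset.sum_filter]
            have hset : (Finset.univ.powerset.filter (fun I : Finset (Fin n) => I ≠ ∅)).filter
                (fun I => I ⊆ T) = T.powerset.filter (fun I => I ≠ ∅) := by
              ext I
              simp [Finset.mem_filter, Finset.mem_powerset, and_comm]
            rw [hset]
            have hTerase : T.powerset.filter (fun I : Finset (Fin n) => I ≠ ∅)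
                = T.powerset.erase ∅ := by
              ext I; simp [Finset.mem_erase, and_comm]
            rw [hTerase, Finset.sum_erase_eq_sub (by simp : (∅ : Finset (Fin n)) ∈ T.powerset)]
            have : ∑ I ∈ T.powerset, (-1 : ℝ) ^ (I.card + 1) * m B
                = -(if T = ∅ then 1 else 0) * m B := by
              simp only [pow_succ, mul_comm ((-1:ℝ)^_) (-1:ℝ)]
              rw [← Finset.sum_mul]
              rw [← Finset.mul_sum, sum_powerset_neg_one_pow_card_real]
              ring
            rw [this]
            simp only [Finset.card_empty, pow_one, ite_mul, one_mul, zero_mul, neg_mul]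
            split_ifs <;> ring
          rw [hval]
          by_cases hTe : T = ∅
          · simp only [hTe, if_pos rfl, sub_self, zero_mul]
            split_ifs <;> simp [hmB]
          · obtain ⟨i, hi⟩ := Finset.nonempty_iff_ne_empty.2 hTe
            have hBi : B ⊆ A i := by simpa [hT] using hi
            have hBU : B ⊆ ⋃ i, A i := hBi.trans (Set.subset_iUnion A i)
            simp [hTe, hBU]
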